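/- Let M be the 2×2 block matrix with blocks M₁₁ = f + o(1) (scalar, f > 0), M₁₂ = M₂₁ᵀ = O(h²) (1×2 block with entries of order h²), and M₂₂ = ν·f·H + o(H) where H = diag(h², h²) and ν > 0. Then for small h, M is invertible and the (1,1) entry of M⁻¹ equals 1/f + o(1). -/

import Mathlib

open Asymptotics Filter Topology

theorem stmt14 (M : ℝ → Matrix (Fin 3) (Fin 3) ℝ) (f ν : ℝ) (hf : 0 < f) (hν : 0 < ν)
    (h00 : Tendsto (fun h => M h 0 0) (𝓝[>] (0 : ℝ)) (𝓝 f))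
    (h01 : (fun h => M h 0 1) =O[𝓝[>] (0 : ℝ)] fun h => h ^ 2)
    (h02 : (fun h => M h 0 2) =O[𝓝[>] (0 : ℝ)] fun h => h ^ 2)
    (h10 : (fun h => M h 1 0) =O[𝓝[>] (0 : ℝ)] fun h => h ^ 2)
    (h20 : (fun h => M h 2 0) =O[𝓝[>] (0 : ℝ)] fun h => h ^ 2)
    (h11 : (fun h => M h 1 1 - ν * f * h ^ 2) =o[𝓝[>] (0 : ℝ)] fun h => h ^ 2)
    (h22 : (fun h => M h 2 2 - ν * f * h ^ 2) =o[𝓝[>] (0 : ℝ)] fun h => h ^ 2)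
    (h12 : (fun h => M h 1 2) =o[𝓝[>] (0 : ℝ)] fun h => h ^ 2)
    (h21 : (fun h => M h 2 1) =o[𝓝[>] (0 : ℝ)] fun h => h ^ 2) :
    (∀ᶠ h in 𝓝[>] (0 : ℝ), IsUnit (M h)) ∧
    Tendsto (fun h => (M h)⁻¹ 0 0) (𝓝[>] (0 : ℝ)) (𝓝 f⁻¹) := by
  set l : Filter ℝ := 𝓝[>] (0 : ℝ) with hl
  have hpos : ∀ᶠ h in l, 0 < h := eventually_nhdsWithin_of_forall (fun x hx => hx)
  -- scaled diagonal entries converge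
  have hb11 : Tendsto (fun h => M h 1 1 / h ^ 2) l (𝓝 (ν * f)) := by
    have h2 : Tendsto (fun h => (M h 1 1 - ν * f * h ^ 2) / h ^ 2 + ν * f) l (𝓝 (0 + ν * f)) :=
      h11.tendsto_div_nhds_zero.add tendsto_const_nhds
    rw [zero_add] at h2
    refine h2.congr' ?_
    filter_upwards [hpos] with h hh
    have h0 : h ≠ 0 := ne_of_gt hh
    field_simp
    ring
  have hb22 : Tendsto (fun h => M h 2 2 / h ^ 2) l (𝓝 (ν * f)) := by
    have h2 : Tendsto (fun h => (M h 2 2 - ν * f * h ^ 2) / h ^ 2 + ν * f) l (𝓝 (0 + ν * f)) :=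
      h22.tendsto_div_nhds_zero.add tendsto_const_nhds
    rw [zero_add] at h2
    refine h2.congr' ?_
    filter_upwards [hpos] with h hh
    have h0 : h ≠ 0 := ne_of_gt hh
    field_simp
    ring
  have hb12 : Tendsto (fun h => M h 1 2 / h ^ 2) l (𝓝 0) := h12.tendsto_div_nhds_zero
  have hb21 : Tendsto (fun h => M h 2 1 / h ^ 2) l (𝓝 0) := h21.tendsto_div_nhds_zero
  -- big-O for diagonal entries
  have hO11 : (fun h => M h 1 1) =O[l] fun h => h ^ 2 := by
    have := h11.isBigO.add ((isBigO_refl (fun h : ℝ => h ^ 2) l).const_mul_left (ν * f))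
    simpa using this
  have hO22 : (fun h => M h 2 2) =O[l] fun h => h ^ 2 := by
    have := h22.isBigO.add ((isBigO_refl (fun h : ℝ => h ^ 2) l).const_mul_left (ν * f))
    simpa using this
  have hpow : (fun h : ℝ => h ^ 2 * (h ^ 2 * h ^ 2)) =o[l] fun h => h ^ 4 := by
    have h6 : (fun x : ℝ => x ^ 6) =o[𝓝 (0 : ℝ)] fun x => x ^ 4 :=
      isLittleO_pow_pow (by norm_num)
    refine (h6.mono nhdsWithin_le_nhds).congr' ?_ (EventuallyEq.refl _ _)
    filter_upwards with h
    ring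
  have E1o : (fun h => M h 0 1 * (M h 1 0 * M h 2 2 - M h 1 2 * M h 2 0)) =o[l]
      fun h => h ^ 4 := by
    have hO : (fun h => M h 0 1 * (M h 1 0 * M h 2 2 - M h 1 2 * M h 2 0)) =O[l]
        fun h => h ^ 2 * (h ^ 2 * h ^ 2) :=
      h01.mul ((h10.mul hO22).sub (h12.isBigO.mul h20))
    exact hO.trans_isLittleO hpow
  have E2o : (fun h => M h 0 2 * (M h 1 0 * M h 2 1 - M h 1 1 * M h 2 0)) =o[l]
      fun h => h ^ 4 := by
    have hO : (fun h => M h 0 2 * (M h 1 0 * M h 2 1 - M h 1 1 * M h 2 0)) =O[l]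
        fun h => h ^ 2 * (h ^ 2 * h ^ 2) :=
      h02.mul ((h10.mul h21.isBigO).sub (hO11.mul h20))
    exact hO.trans_isLittleO hpow
  -- scaled determinant converges to ν^2 f^3
  have hdet : Tendsto (fun h => (M h).det / h ^ 4) l (𝓝 (ν ^ 2 * f ^ 3)) := by
    have hT := ((h00.mul ((hb11.mul hb22).sub (hb12.mul hb21))).sub
        E1o.tendsto_div_nhds_zero).add E2o.tendsto_div_nhds_zero
    have hL : f * (ν * f * (ν * f) - 0 * 0) - 0 + 0 = ν ^ 2 * f ^ 3 := by ring
    rw [hL] at hT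
    refine hT.congr' ?_
    filter_upwards [hpos] with h hh
    have h0 : h ≠ 0 := ne_of_gt hh
    rw [Matrix.det_fin_three]
    field_simp
    ring
  -- scaled (1,1)-cofactor converges to ν^2 f^2
  have hTnum : Tendsto (fun h => (M h 1 1 * M h 2 2 - M h 1 2 * M h 2 1) / h ^ 4) l
      (𝓝 (ν ^ 2 * f ^ 2)) := by
    have hT := (hb11.mul hb22).sub (hb12.mul hb21)
    have hL : ν * f * (ν * f) - 0 * 0 = ν ^ 2 * f ^ 2 := by ring
    rw [hL] at hT
    refine hT.congr' ?_
    filter_upwards [hpos] with h hh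
    have h0 : h ≠ 0 := ne_of_gt hh
    rw [div_mul_div_comm, div_mul_div_comm, div_sub_div_same]
    congr 1
    ring
  have hdet_ne : ∀ᶠ h in l, (M h).det ≠ 0 := by
    have hne : ∀ᶠ h in l, (M h).det / h ^ 4 ≠ 0 :=
      hdet.eventually_ne (by positivity)
    filter_upwards [hne, hpos] with h h1 h2 hc
    apply h1
    rw [hc, zero_div]
  have hunit : ∀ᶠ h in l, IsUnit (M h) := by
    filter_upwards [hdet_ne] with h hd
    exact (Matrix.isUnit_iff_isUnit_det _).mpr (isUnit_iff_ne_zero.mpr hd)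
  refine ⟨hunit, ?_⟩
  have hquot := hTnum.div hdet (by positivity)
  have hL : ν ^ 2 * f ^ 2 / (ν ^ 2 * f ^ 3) = f⁻¹ := by
    field_simp
  rw [hL] at hquot
  refine hquot.congr' ?_
  filter_upwards [hdet_ne, hpos] with h hd hh
  have h0 : h ≠ 0 := ne_of_gt hh
  have hinv : (M h)⁻¹ 0 0 = ((M h).det)⁻¹ * (M h 1 1 * M h 2 2 - M h 1 2 * M h 2 1) := by
    rw [Matrix.inv_def, Ring.inverse_eq_inv', Matrix.adjugate_fin_three]
    simp [Matrix.smul_apply]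
  rw [hinv]
  rw [Pi.div_apply]
  field_simp
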